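/- arXiv:1612.06793 — 2 statements merged into one kernel-verified Lean document; each statement's English description precedes it below -/
import Mathlib

section
/- The jet map is well-defined: for positive integers m, n, d, if (f_1,…,f_m) is an m-tuple of monic degree-d complex polynomials with no common root of multiplicity ≥ n, then the mn polynomials f_k, f_k + f_k', f_k + f_k'', …, f_k + f_k^{(n−1)} (for k = 1,…,m) are all monic of degree d and have no common complex root. -/
open Polynomial

/-- Well-definedness of the jet map: if `(f_1,…,f_m)` are monic of degree `d`
with no common root of multiplicity ≥ n, then the `mn` polynomials
`f_k, f_k + f_k', …, f_k + f_k^{(n-1)}` are all monic of degree `d` and have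
no common complex root. -/
theorem stmt_6 (m n d : ℕ) (hm : 1 ≤ m) (hn : 1 ≤ n) (hd : 1 ≤ d)
    (f : Fin m → Polynomial ℂ)
    (hmonic : ∀ k, (f k).Monic) (hdeg : ∀ k, (f k).natDegree = d)
    (hpoly : ¬ ∃ α : ℂ, ∀ k, (X - C α) ^ n ∣ f k)
    (g : Fin m → ℕ → Polynomial ℂ)
    (hg : ∀ k i, g k i = if i = 0 then f k else f k + Polynomial.derivative^[i] (f k)) :
    (∀ k, ∀ i < n, (g k i).Monic ∧ (g k i).natDegree = d) ∧
      ¬ ∃ α : ℂ, ∀ k, ∀ i < n, (g k i).eval α = 0 := by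
  have hfne : ∀ k, f k ≠ 0 := fun k => (hmonic k).ne_zero
  have hdlt : ∀ (k) (i : ℕ), 1 ≤ i →
      (Polynomial.derivative^[i] (f k)).degree < (f k).degree := by
    intro k i hi
    apply degree_lt_degree
    have := natDegree_iterate_derivative (f k) i
    rw [hdeg k] at this ⊢
    omega
  constructor
  · intro k i _
    rcases Nat.eq_zero_or_pos i with rfl | hi
    · rw [hg k 0]; simp [hmonic k, hdeg k]
    · rw [hg k i, if_neg (Nat.pos_iff_ne_zero.mp hi)]
      have hmon : (f k + Polynomial.derivative^[i] (f k)).Monic :=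
        (hmonic k).add_of_left (hdlt k i hi)
      refine ⟨hmon, ?_⟩
      rw [natDegree_add_eq_left_of_degree_lt (hdlt k i hi), hdeg k]
  · rintro ⟨α, hα⟩
    apply hpoly
    refine ⟨α, fun k => ?_⟩
    have hroot : ∀ j ≤ n - 1, (Polynomial.derivative^[j] (f k)).IsRoot α := by
      intro j hj
      rcases Nat.eq_zero_or_pos j with rfl | hjpos
      · have := hα k 0 hn
        rw [hg k 0, if_pos rfl] at this
        simpa [IsRoot] using this
      · have h0 := hα k 0 hn
        rw [hg k 0, if_pos rfl] at h0
        have hj' := hα k j (by omega)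
        rw [hg k j, if_neg (Nat.pos_iff_ne_zero.mp hjpos)] at hj'
        simp only [eval_add] at hj'
        simpa [IsRoot, h0] using hj'
    have hlt : n - 1 < (f k).rootMultiplicity α := by
      refine (lt_rootMultiplicity_iff_isRoot_iterate_derivative_of_mem_nonZeroDivisors
        (hfne k) ?_).2 hroot
      exact mem_nonZeroDivisors_of_ne_zero (by exact_mod_cast (Nat.factorial_pos _).ne')
    have : n ≤ (f k).rootMultiplicity α := by omega
    exact (le_rootMultiplicity_iff (hfne k)).mp this
end

section
/- The discriminant Σ^{d,m}_n has complex codimension mn − 1 in ℂ^{dm} when d ≥ n: the image of the map ℂ × ℂ^{m(d−n)} → ℂ^{dm} sending (α, (q_1,…,q_m)) ↦ ((z−α)^n q̂_1, …, (z−α)^n q̂_m) (where q̂_k is the monic degree-(d−n) polynomial with coefficient vector q_k, identified with its coefficient vector in ℂ^{dm}) is exactly Σ^{d,m}_n, so Σ^{d,m}_n is the image of an algebraic map from an affine space of dimension m(d−n) + 1 = dm − (mn − 1). -/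
open Polynomial

/-- For d ≥ n, the discriminant is the image of
`(α, (q_1,…,q_m)) ↦ ((z-α)^n q_1, …, (z-α)^n q_m)`: a tuple of monic degree-d
polynomials has a common root of multiplicity ≥ n iff each `f_k = (z-α)^n q_k` with
`q_k` monic of degree `d - n`, for some common `α`. -/
theorem stmt_19 (m n d : ℕ) (hm : 1 ≤ m) (hn : 1 ≤ n) (hdn : n ≤ d)
    (f : Fin m → Polynomial ℂ)
    (hmonic : ∀ k, (f k).Monic) (hdeg : ∀ k, (f k).natDegree = d) :
    (∃ α : ℂ, ∀ k, (X - C α) ^ n ∣ f k) ↔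
      ∃ (α : ℂ) (q : Fin m → Polynomial ℂ),
        (∀ k, (q k).Monic ∧ (q k).natDegree = d - n) ∧
        ∀ k, f k = (X - C α) ^ n * q k := by
  constructor
  · rintro ⟨α, hα⟩
    choose q hq using hα
    have hpmonic : ((X - C α) ^ n : Polynomial ℂ).Monic := (monic_X_sub_C α).pow n
    refine ⟨α, q, fun k => ?_, fun k => hq k⟩
    have hqmonic : (q k).Monic := by
      have := hmonic k
      rw [hq k] at this
      exact hpmonic.of_mul_monic_left this
    constructor
    · exact hqmonic
    · have hd := hdeg k
      rw [hq k, hpmonic.natDegree_mul hqmonic, natDegree_pow, natDegree_X_sub_C,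
        mul_one] at hd
      omega
  · rintro ⟨α, q, _, hq⟩
    exact ⟨α, fun k => ⟨q k, hq k⟩⟩
end
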